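/- Let l be an affine line in the Euclidean plane, O a point not on l, and A the orthogonal projection of O onto l. Fix r > 0. Let O₁ be the reflection of O across the line l, and let A* be the image of A under inversion in the circle with center O and radius r. Then the image of O₁ under this inversion equals the midpoint of O and A*, i.e. the center of the circle with diameter OA*. -/

import Mathlib

open EuclideanGeometry Real

/-- The center of the circle with diameter `OA*` (the inversion image of a line `l`
not through `O`, where `A*` is the inversion image of the projection `A` of `O` onto
`l`) is the inversion image of the reflection `O₁` of `O` across `l`. -/
theorem inversion_of_reflection_eq_center
    (l : AffineSubspace ℝ (EuclideanSpace ℝ (Fin 2)))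
    [Nonempty l] [Submodule.HasOrthogonalProjection l.direction]
    (hline : Module.finrank ℝ l.direction = 1)
    (O : EuclideanSpace ℝ (Fin 2)) (hO : O ∉ l)
    (r : ℝ) (hr : 0 < r)
    (A Astar O₁ : EuclideanSpace ℝ (Fin 2))
    (hA : A = EuclideanGeometry.orthogonalProjection l O)
    (hAstar : Astar = EuclideanGeometry.inversion O r A)
    (hO₁ : O₁ = EuclideanGeometry.reflection l O) :
    EuclideanGeometry.inversion O r O₁ = midpoint ℝ O Astar := by
  have hAO : A ≠ O := by
    intro h
    apply hO
    rw [← h, hA]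
    exact (EuclideanGeometry.orthogonalProjection l O).2
  have hd : dist A O ≠ 0 := dist_ne_zero.mpr hAO
  have hO₁' : O₁ -ᵥ O = (2 : ℝ) • (A -ᵥ O) := by
    rw [hO₁, EuclideanGeometry.reflection_apply', ← hA, vadd_vsub_assoc, two_smul]
  have hdist : dist O₁ O = 2 * dist A O := by
    rw [dist_eq_norm_vsub (EuclideanSpace ℝ (Fin 2)), hO₁', norm_smul,
      ← dist_eq_norm_vsub (EuclideanSpace ℝ (Fin 2))]
    simp
  rw [EuclideanGeometry.inversion_def]
  simp only [hdist, hO₁', hAstar, EuclideanGeometry.inversion_def, midpoint_eq_smul_add]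
  simp only [vadd_eq_add, vsub_eq_sub, smul_add, smul_smul, invOf_eq_inv]
  rw [div_pow, div_pow]
  field_simp
  module
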